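/- Every 4-algebra E is isomorphic to a twisted product V # A where V = E·E is the derived subalgebra (with its induced multiplication) and A = E/(E·E) carries the trivial (abelian) algebra structure. -/
import Mathlib


structure FourAlgebra (k : Type*) (A : Type*) [Field k] [AddCommGroup A] [Module k A] where
  mul : A →ₗ[k] A →ₗ[k] A
  comm : ∀ a b : A, mul a b = mul b a
  four : ∀ a : A, mul (mul a a) (mul a a) = 0

/-- Every 4-algebra E is isomorphic to a twisted product E' # (E/E'), where E' = E·E is
the derived subalgebra (with its induced multiplication) and E/E' carries the abelian
algebra structure. -/
theorem stmt11 (k E : Type*) [Field k] [AddCommGroup E] [Module k E]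
    (h2 : (2 : k) ≠ 0) (F : FourAlgebra k E) :
    let V : Submodule k E := Submodule.span k {z : E | ∃ a b : E, z = F.mul a b}
    ∃ (mv : V →ₗ[k] V →ₗ[k] V) (tr : (E ⧸ V) →ₗ[k] V →ₗ[k] V)
      (f : (E ⧸ V) →ₗ[k] (E ⧸ V) →ₗ[k] V),
      (∀ x y : V, ((mv x y : V) : E) = F.mul (x : E) (y : E)) ∧
      (∀ a b : E ⧸ V, f a b = f b a) ∧
      ∃ φ : (V × (E ⧸ V)) ≃ₗ[k] E,
        ∀ z w : V × (E ⧸ V),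
          φ (mv z.1 w.1 + tr z.2 w.1 + tr w.2 z.1 + f z.2 w.2, 0) = F.mul (φ z) (φ w) := by
  intro V
  have hmem : ∀ a b : E, F.mul a b ∈ V := fun a b =>
    Submodule.subset_span ⟨a, b, rfl⟩
  let M : E →ₗ[k] E →ₗ[k] V := LinearMap.mk₂ k (fun a b => ⟨F.mul a b, hmem a b⟩)
    (fun a a' b => Subtype.ext (by simp))
    (fun c a b => Subtype.ext (by simp))
    (fun a b b' => Subtype.ext (by simp))
    (fun c a b => Subtype.ext (by simp))
  have hMcoe : ∀ a b : E, ((M a b : V) : E) = F.mul a b := fun a b => rfl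
  obtain ⟨s, hs⟩ := V.mkQ.exists_rightInverse_of_surjective (by simp)
  have hs' : ∀ a : E ⧸ V, V.mkQ (s a) = a := fun a => LinearMap.congr_fun hs a
  let mv : V →ₗ[k] V →ₗ[k] V := M.compl₁₂ V.subtype V.subtype
  let tr : (E ⧸ V) →ₗ[k] V →ₗ[k] V := (M.comp s).compl₂ V.subtype
  let f : (E ⧸ V) →ₗ[k] (E ⧸ V) →ₗ[k] V := (M.comp s).compl₂ s
  refine ⟨mv, tr, f, fun x y => rfl, fun a b => Subtype.ext (F.comm _ _), ?_⟩
  let L : (V × (E ⧸ V)) →ₗ[k] E := (V.subtype).coprod s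
  have hbij : Function.Bijective L := by
    constructor
    · intro z w h
      have h1 : (z.1 : E) + s z.2 = (w.1 : E) + s w.2 := h
      have hs'' : ∀ a : E ⧸ V, (Submodule.Quotient.mk (s a) : E ⧸ V) = a := hs'
      have h2 : z.2 = w.2 := by
        have := congrArg V.mkQ h1
        simpa [hs'', (Submodule.Quotient.mk_eq_zero V).2 z.1.2,
          (Submodule.Quotient.mk_eq_zero V).2 w.1.2] using this
      have h3 : (z.1 : E) = (w.1 : E) := by
        rw [h2] at h1; exact add_right_cancel h1
      exact Prod.ext (Subtype.ext h3) h2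
    · intro e
      refine ⟨(⟨e - s (V.mkQ e), ?_⟩, V.mkQ e), ?_⟩
      · rw [← Submodule.Quotient.mk_eq_zero]
        have hs'' : ∀ a : E ⧸ V, (Submodule.Quotient.mk (s a) : E ⧸ V) = a := hs'
        simp [hs'', Submodule.Quotient.mk_sub]
      · show (e - s (V.mkQ e)) + s (V.mkQ e) = e
        abel
  refine ⟨LinearEquiv.ofBijective L hbij, fun z w => ?_⟩
  show ((mv z.1 w.1 + tr z.2 w.1 + tr w.2 z.1 + f z.2 w.2 : V) : E) + s 0
      = F.mul ((z.1 : E) + s z.2) ((w.1 : E) + s w.2)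
  simp only [map_zero, add_zero, Submodule.coe_add]
  have hc : F.mul (s w.2) (z.1 : E) = F.mul (z.1 : E) (s w.2) := F.comm _ _
  simp only [mv, tr, f, LinearMap.compl₁₂_apply, LinearMap.compl₂_apply,
    LinearMap.comp_apply, Submodule.coe_subtype, hMcoe, map_add, LinearMap.add_apply, hc]
  abel
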